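/- Let (dₙ), (Dₙ), and multi-digits bₙ be as in the multi-digit expansion. If x, y ∈ (0,1) satisfy |x − y| < 10^{−D_{(n+1)²+1}} and for y there exist indices k₁, k₂ ∈ (n², (n+1)²] with b_{k₁}(y) = 10^{d_{k₁}} − 1 and b_{k₂}(y) ≠ 10^{d_{k₂}} − 1, then b_k(x) = b_k(y) for all k ≤ n². -/

import Mathlib

/-- The `k`-th decimal digit of `x` (convention: the expansion ending in zeros). -/
noncomputable def digit (x : ℝ) (k : ℕ) : ℕ := (⌊x * 10 ^ k⌋ % 10).toNat

/-- `Dsum d n = d 1 + ⋯ + d n`, with `Dsum d 0 = 0`. -/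
def Dsum (d : ℕ → ℕ) (n : ℕ) : ℕ := ∑ k ∈ Finset.Icc 1 n, d k

/-- The `n`-th multi-digit of `x` with respect to the sequence `d`. -/
noncomputable def mdigit (d : ℕ → ℕ) (n : ℕ) (x : ℝ) : ℕ :=
  ∑ k ∈ Finset.Icc (Dsum d (n - 1) + 1) (Dsum d n), 10 ^ (Dsum d n - k) * digit x k

/-- The number of maximal multi-digits of `x` in the block `(n², (n+1)²]`. -/
noncomputable def Ccount (d : ℕ → ℕ) (x : ℝ) (n : ℕ) : ℕ :=
  ((Finset.Ioc (n ^ 2) ((n + 1) ^ 2)).filter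
    (fun k => mdigit d k x = 10 ^ (d k) - 1)).card

lemma digit_le_nine (x : ℝ) (k : ℕ) : digit x k ≤ 9 := by
  unfold digit
  have h1 : (0:ℤ) ≤ ⌊x * 10 ^ k⌋ % 10 := Int.emod_nonneg _ (by norm_num)
  have h2 : ⌊x * 10 ^ k⌋ % 10 < 10 := Int.emod_lt_of_pos _ (by norm_num)
  omega

lemma Dsum_succ (d : ℕ → ℕ) (t : ℕ) : Dsum d (t + 1) = Dsum d t + d (t + 1) := by
  unfold Dsum
  rw [Finset.sum_Icc_succ_top (by omega)]

lemma Dsum_mono (d : ℕ → ℕ) {a b : ℕ} (hab : a ≤ b) : Dsum d a ≤ Dsum d b :=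
  Finset.sum_le_sum_of_subset (Finset.Icc_subset_Icc_right hab)

lemma Dsum_strict (d : ℕ → ℕ) (hdpos : ∀ n, 1 ≤ n → 0 < d n) {a b : ℕ} (hab : a < b) :
    Dsum d a < Dsum d b := by
  have h1 : Dsum d a < Dsum d (a + 1) := by
    rw [Dsum_succ]; have := hdpos (a + 1) (by omega); omega
  exact lt_of_lt_of_le h1 (Dsum_mono d (by omega))

lemma sum_le_max (c : ℕ → ℕ) (hc : ∀ i, c i ≤ 9) (a : ℕ) :
    ∀ b, a ≤ b → (∑ i ∈ Finset.Icc (a + 1) b, 10 ^ (b - i) * c i) ≤ 10 ^ (b - a) - 1 := by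
  refine Nat.le_induction ?_ ?_
  · simp
  · intro b hab IH
    rw [Finset.sum_Icc_succ_top (by omega)]
    have hcong : ∀ i ∈ Finset.Icc (a + 1) b, 10 ^ (b + 1 - i) * c i = 10 * (10 ^ (b - i) * c i) := by
      intro i hi
      rw [Finset.mem_Icc] at hi
      rw [show b + 1 - i = (b - i) + 1 from by omega, pow_succ]
      ring
    rw [Finset.sum_congr rfl hcong, ← Finset.mul_sum]
    have hT : 1 ≤ 10 ^ (b - a) := Nat.one_le_pow _ _ (by norm_num)
    have h9 := hc (b + 1)
    rw [show b + 1 - (b + 1) = 0 from by omega, show b + 1 - a = (b - a) + 1 from by omega,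
      pow_succ, pow_zero]
    omega

lemma sum_eq_max_iff (c : ℕ → ℕ) (hc : ∀ i, c i ≤ 9) (a : ℕ) :
    ∀ b, a ≤ b → ((∑ i ∈ Finset.Icc (a + 1) b, 10 ^ (b - i) * c i) = 10 ^ (b - a) - 1 ↔
      ∀ i ∈ Finset.Icc (a + 1) b, c i = 9) := by
  refine Nat.le_induction ?_ ?_
  · simp
  · intro b hab IH
    rw [Finset.sum_Icc_succ_top (by omega)]
    have hcong : ∀ i ∈ Finset.Icc (a + 1) b, 10 ^ (b + 1 - i) * c i = 10 * (10 ^ (b - i) * c i) := by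
      intro i hi
      rw [Finset.mem_Icc] at hi
      rw [show b + 1 - i = (b - i) + 1 from by omega, pow_succ]
      ring
    rw [Finset.sum_congr rfl hcong, ← Finset.mul_sum]
    have hS := sum_le_max c hc a b hab
    have hT : 1 ≤ 10 ^ (b - a) := Nat.one_le_pow _ _ (by norm_num)
    have h9 := hc (b + 1)
    rw [show b + 1 - (b + 1) = 0 from by omega, show b + 1 - a = (b - a) + 1 from by omega,
      pow_succ, pow_zero]
    constructor
    · intro h i hi
      rw [Finset.mem_Icc] at hi
      rcases Nat.lt_or_ge i (b + 1) with h' | h'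
      · exact IH.mp (by omega) i (Finset.mem_Icc.mpr ⟨hi.1, by omega⟩)
      · have hib : i = b + 1 := by omega
        subst hib; omega
    · intro h
      have h1 : c (b + 1) = 9 := h (b + 1) (Finset.mem_Icc.mpr ⟨by omega, le_refl _⟩)
      have h2 : (∑ i ∈ Finset.Icc (a + 1) b, 10 ^ (b - i) * c i) = 10 ^ (b - a) - 1 :=
        IH.mpr (fun i hi => h i (by rw [Finset.mem_Icc] at hi ⊢; omega))
      omega

lemma digit_split (y : ℝ) (j m : ℕ) (hjm : j < m) :
    ∃ r : ℤ, 0 ≤ r ∧ r < 10 ^ (m - j) ∧ digit y m = (r % 10).toNat ∧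
      (r : ℝ) ≤ Int.fract (y * 10 ^ j) * 10 ^ (m - j) ∧
      Int.fract (y * 10 ^ j) * 10 ^ (m - j) < (r : ℝ) + 1 := by
  set u := y * 10 ^ j with hu
  set f := Int.fract u with hf
  set p := m - j with hp
  refine ⟨⌊f * 10 ^ p⌋, ?_, ?_, ?_, Int.floor_le _, Int.lt_floor_add_one _⟩
  · exact Int.floor_nonneg.mpr (mul_nonneg (Int.fract_nonneg u) (by positivity))
  · rw [Int.floor_lt]
    push_cast
    have h1 : f < 1 := Int.fract_lt_one u
    have h2 : (0:ℝ) < 10 ^ p := by positivity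
    nlinarith
  · unfold digit
    have hpow : (10:ℝ) ^ j * 10 ^ p = 10 ^ m := by rw [← pow_add]; congr 1; omega
    have hym : y * 10 ^ m = f * 10 ^ p + ((⌊u⌋ * 10 ^ p : ℤ) : ℝ) := by
      have hfd : f = u - ⌊u⌋ := rfl
      push_cast
      rw [hfd, hu, ← hpow]
      ring
    rw [hym, Int.floor_add_intCast]
    have hd : (⌊f * 10 ^ p⌋ + ⌊u⌋ * 10 ^ p) % 10 = ⌊f * 10 ^ p⌋ % 10 := by
      have hdvd : (10:ℤ) ∣ 10 ^ p := dvd_pow_self 10 (by omega)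
      obtain ⟨t, ht⟩ := hdvd
      rw [ht, show ⌊f * 10 ^ p⌋ + ⌊u⌋ * (10 * t) = ⌊f * 10 ^ p⌋ + 10 * (⌊u⌋ * t) from by ring,
        Int.add_mul_emod_self_left]
    rw [hd]

lemma fract_ge_of_digit_nine (y : ℝ) (j m : ℕ) (hjm : j < m) (h : digit y m = 9) :
    (9:ℝ) / 10 ^ (m - j) ≤ Int.fract (y * 10 ^ j) := by
  obtain ⟨r, hr0, hrlt, hrd, hrle, _⟩ := digit_split y j m hjm
  rw [h] at hrd
  have hr9 : 9 ≤ r := by omega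
  have hp : (0:ℝ) < 10 ^ (m - j) := by positivity
  rw [div_le_iff₀ hp]
  calc (9:ℝ) ≤ (r:ℝ) := by exact_mod_cast hr9
  _ ≤ _ := hrle

lemma fract_lt_of_digit_ne_nine (y : ℝ) (j m : ℕ) (hjm : j < m) (h : digit y m ≠ 9) :
    Int.fract (y * 10 ^ j) < 1 - 1 / 10 ^ (m - j) := by
  obtain ⟨r, hr0, hrlt, hrd, _, hrlt2⟩ := digit_split y j m hjm
  have hdvd : (10:ℤ) ∣ 10 ^ (m - j) := dvd_pow_self 10 (by omega)
  have hr2 : r ≤ 10 ^ (m - j) - 2 := by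
    rw [hrd] at h
    omega
  have hp : (0:ℝ) < 10 ^ (m - j) := by positivity
  have hr2' : (r:ℝ) + 1 ≤ (10:ℝ) ^ (m - j) - 1 := by
    have hc : ((r:ℤ):ℝ) ≤ (((10:ℤ) ^ (m - j) - 2 : ℤ) : ℝ) := by exact_mod_cast hr2
    push_cast at hc
    linarith
  have h1 : Int.fract (y * 10 ^ j) * 10 ^ (m - j) < 10 ^ (m - j) - 1 :=
    lt_of_lt_of_le hrlt2 hr2'
  rw [show (1:ℝ) - 1 / 10 ^ (m - j) = (10 ^ (m - j) - 1) / 10 ^ (m - j) from by field_simp,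
    lt_div_iff₀ hp]
  exact h1

lemma floor_eq_floor (u v ε : ℝ) (h : |u - v| < ε)
    (h1 : ε ≤ Int.fract v) (h2 : Int.fract v ≤ 1 - ε) : ⌊u⌋ = ⌊v⌋ := by
  have hv : (⌊v⌋:ℝ) + Int.fract v = v := Int.floor_add_fract v
  rw [abs_sub_lt_iff] at h
  rw [Int.floor_eq_iff]
  constructor
  · linarith
  · push_cast
    linarith


theorem stmt9 (d : ℕ → ℕ) (hdpos : ∀ n, 1 ≤ n → 0 < d n)
    (hdmono : ∀ n, 1 ≤ n → d n < d (n + 1))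
    (n : ℕ) (x y : ℝ) (hx : x ∈ Set.Ioo (0 : ℝ) 1) (hy : y ∈ Set.Ioo (0 : ℝ) 1)
    (hclose : |x - y| < (10 : ℝ) ^ (-(Dsum d ((n + 1) ^ 2 + 1) : ℤ)))
    (k₁ k₂ : ℕ)
    (hk₁ : n ^ 2 < k₁ ∧ k₁ ≤ (n + 1) ^ 2)
    (hk₂ : n ^ 2 < k₂ ∧ k₂ ≤ (n + 1) ^ 2)
    (h₁ : mdigit d k₁ y = 10 ^ (d k₁) - 1)
    (h₂ : mdigit d k₂ y ≠ 10 ^ (d k₂) - 1) :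
    ∀ k, 1 ≤ k → k ≤ n ^ 2 → mdigit d k x = mdigit d k y := by
  obtain ⟨hk₁1, hk₁2⟩ := hk₁
  obtain ⟨hk₂1, hk₂2⟩ := hk₂
  set N := Dsum d ((n + 1) ^ 2 + 1) with hNdef
  have e₁ : Dsum d k₁ = Dsum d (k₁ - 1) + d k₁ := by
    obtain ⟨t, rfl⟩ : ∃ t, k₁ = t + 1 := ⟨k₁ - 1, by omega⟩
    simp [Dsum_succ]
  have hd₁ : 0 < d k₁ := hdpos k₁ (by omega)
  have h9 : ∀ i ∈ Finset.Icc (Dsum d (k₁ - 1) + 1) (Dsum d k₁), digit y i = 9 := by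
    apply (sum_eq_max_iff (digit y) (fun i => digit_le_nine y i) (Dsum d (k₁ - 1))
      (Dsum d k₁) (by omega)).mp
    unfold mdigit at h₁
    rw [show Dsum d k₁ - Dsum d (k₁ - 1) = d k₁ from by omega]
    exact h₁
  have hm₁9 : digit y (Dsum d k₁) = 9 := h9 _ (Finset.mem_Icc.mpr ⟨by omega, le_refl _⟩)
  have e₂ : Dsum d k₂ = Dsum d (k₂ - 1) + d k₂ := by
    obtain ⟨t, rfl⟩ : ∃ t, k₂ = t + 1 := ⟨k₂ - 1, by omega⟩
    simp [Dsum_succ]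
  have hex : ∃ m ∈ Finset.Icc (Dsum d (k₂ - 1) + 1) (Dsum d k₂), digit y m ≠ 9 := by
    by_contra hall
    push_neg at hall
    apply h₂
    unfold mdigit
    rw [show (10:ℕ) ^ (d k₂) - 1 = 10 ^ (Dsum d k₂ - Dsum d (k₂ - 1)) - 1 from by
      rw [show Dsum d k₂ - Dsum d (k₂ - 1) = d k₂ from by omega]]
    exact (sum_eq_max_iff (digit y) (fun i => digit_le_nine y i) _ _ (by omega)).mpr hall
  obtain ⟨m₂, hm₂mem, hm₂9⟩ := hex
  rw [Finset.mem_Icc] at hm₂mem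
  have hm₁gt : Dsum d (n ^ 2) < Dsum d k₁ := Dsum_strict d hdpos hk₁1
  have hm₁N : Dsum d k₁ ≤ N := le_of_lt (Dsum_strict d hdpos (by omega))
  have hm₂gt : Dsum d (n ^ 2) < m₂ :=
    lt_of_le_of_lt (Dsum_mono d (show n ^ 2 ≤ k₂ - 1 from by omega)) (by omega)
  have hm₂N : m₂ ≤ N := le_trans hm₂mem.2 (le_of_lt (Dsum_strict d hdpos (by omega)))
  have hclose' : |x - y| < 1 / 10 ^ N := by
    have hz : (10:ℝ) ^ (-(N:ℤ)) = 1 / 10 ^ N := by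
      rw [zpow_neg, zpow_natCast, one_div]
    rw [← hz]
    exact hclose
  have key : ∀ i : ℕ, i ≤ Dsum d (n ^ 2) → digit x i = digit y i := by
    intro i hi
    have him1 : i < Dsum d k₁ := by omega
    have him2 : i < m₂ := by omega
    have hfloor : ⌊x * 10 ^ i⌋ = ⌊y * 10 ^ i⌋ := by
      apply floor_eq_floor _ _ ((10:ℝ) ^ i / 10 ^ N)
      · have hxy : x * 10 ^ i - y * 10 ^ i = (x - y) * 10 ^ i := by ring
        rw [hxy, abs_mul, abs_of_nonneg (show (0:ℝ) ≤ (10:ℝ) ^ i from by positivity)]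
        have h10 : (0:ℝ) < 10 ^ i := by positivity
        calc |x - y| * 10 ^ i < (1 / 10 ^ N) * 10 ^ i :=
              mul_lt_mul_of_pos_right hclose' h10
          _ = 10 ^ i / 10 ^ N := by ring
      · have hf := fract_ge_of_digit_nine y i (Dsum d k₁) him1 hm₁9
        have hle : (10:ℝ) ^ i / 10 ^ N ≤ 9 / 10 ^ (Dsum d k₁ - i) := by
          rw [div_le_div_iff₀ (by positivity) (by positivity)]
          have he : (10:ℝ) ^ i * 10 ^ (Dsum d k₁ - i) = 10 ^ (Dsum d k₁) := by
            rw [← pow_add]; congr 1; omega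
          rw [he]
          have hle2 : (10:ℝ) ^ (Dsum d k₁) ≤ 10 ^ N :=
            pow_le_pow_right₀ (by norm_num) hm₁N
          nlinarith [pow_pos (show (0:ℝ) < 10 from by norm_num) N]
        linarith
      · have hf := fract_lt_of_digit_ne_nine y i m₂ him2 hm₂9
        have hle : (10:ℝ) ^ i / 10 ^ N ≤ 1 / 10 ^ (m₂ - i) := by
          rw [div_le_div_iff₀ (by positivity) (by positivity)]
          have he : (10:ℝ) ^ i * 10 ^ (m₂ - i) = 10 ^ m₂ := by
            rw [← pow_add]; congr 1; omega
          rw [he, one_mul]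
          exact pow_le_pow_right₀ (by norm_num) hm₂N
        linarith
    unfold digit
    rw [hfloor]
  intro k hk1 hk2
  unfold mdigit
  apply Finset.sum_congr rfl
  intro i hi
  rw [Finset.mem_Icc] at hi
  have hiD : i ≤ Dsum d (n ^ 2) := le_trans hi.2 (Dsum_mono d hk2)
  rw [key i hiD]
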